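/- Let 0 ≤ α < γ and 1 < p < ∞. Then X^p_α ⊆ X^p_γ, with ‖g‖_{X^p_γ} ≤ C ‖g‖_{X^p_α}. -/

import Mathlib

open MeasureTheory Metric Complex ENNReal

/-- The open unit disk in `ℂ`. -/
def unitDisk : Set ℂ := Metric.ball (0 : ℂ) 1

/-- Normalized area measure `dA = (1/π) dx dy` on `ℂ`. -/
noncomputable def mA : Measure ℂ := (ENNReal.ofReal Real.pi)⁻¹ • volume

/-- The `p`-th power of the `X^p_α` norm:
`‖g‖_{X^p_α}^p = |g(0)|^p + ∫_𝔻 ((1-|w|²)^α ∫_𝔻 |g'(z)|² dA_α(z)/|1-conj(w)z|^{2+2α})^{p/2}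
(1-|w|²)^{p-2} dA(w)`, valued in `[0,∞]`. -/
noncomputable def XnormE (p α : ℝ) (g : ℂ → ℂ) : ℝ≥0∞ :=
  ENNReal.ofReal (‖g 0‖ ^ p) +
    ∫⁻ w in unitDisk,
      (ENNReal.ofReal ((1 - ‖w‖ ^ 2) ^ α) *
        ∫⁻ z in unitDisk,
          ENNReal.ofReal (‖deriv g z‖ ^ 2 * ((α + 1) * (1 - ‖z‖ ^ 2) ^ α) /
            ‖1 - (starRingEnd ℂ) w * z‖ ^ (2 + 2 * α)) ∂mA) ^ (p / 2) *
      ENNReal.ofReal ((1 - ‖w‖ ^ 2) ^ (p - 2)) ∂mA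

/-- Let `0 ≤ α < γ` and `1 < p < ∞`. Then `X^p_α ⊆ X^p_γ`, with
`‖g‖_{X^p_γ}^p ≤ C ‖g‖_{X^p_α}^p` (i.e. `‖g‖_{X^p_γ} ≤ C^{1/p} ‖g‖_{X^p_α}`). -/

lemma key_geo (w z : ℂ) : (1-‖w‖^2)*(1-‖z‖^2) ≤ ‖1 - (starRingEnd ℂ) w * z‖^2 := by
  have h1 : ((starRingEnd ℂ) w * z).re ≤ ‖(starRingEnd ℂ) w * z‖ := Complex.re_le_norm _
  have h2 : ‖(starRingEnd ℂ) w * z‖ = ‖w‖ * ‖z‖ := by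
    rw [norm_mul, RCLike.norm_conj]
  have hn : ∀ u : ℂ, ‖u‖^2 = Complex.normSq u := fun u => by
    rw [Complex.sq_norm]
  have h3 : ‖1 - (starRingEnd ℂ) w * z‖^2
      = 1 - 2*((starRingEnd ℂ) w * z).re + ‖(starRingEnd ℂ) w * z‖^2 := by
    rw [hn, hn, Complex.normSq_sub]
    simp [Complex.normSq_one]; ring
  nlinarith [sq_nonneg (‖w‖ - ‖z‖), sq_nonneg (‖w‖*‖z‖)]

lemma pow_div_mono {t D α γ : ℝ} (ht : 0 < t) (hD : 0 < D) (hDt : D ≤ t^2) (hαγ : α ≤ γ) :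
    D ^ γ / t ^ (2 + 2*γ) ≤ D ^ α / t ^ (2 + 2*α) := by
  have ht2 : (0:ℝ) < t ^ 2 := by positivity
  have key : ∀ β : ℝ, D ^ β / t ^ (2 + 2*β) = (D / t^2) ^ β / t^2 := by
    intro β
    rw [Real.div_rpow hD.le ht2.le, Real.rpow_add ht]
    have h1 : t ^ ((2:ℝ)) = t ^ 2 := by
      rw [show ((2:ℝ)) = ((2:ℕ):ℝ) by norm_num, Real.rpow_natCast]
    have h2 : t ^ (2*β) = (t^2) ^ β := by
      rw [← Real.rpow_natCast t 2, ← Real.rpow_mul ht.le]; norm_num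
    rw [h1, h2]
    rw [div_div]
    ring
  rw [key γ, key α]
  have hbase := Real.rpow_le_rpow_of_exponent_ge (div_pos hD ht2) ((div_le_one ht2).mpr hDt) hαγ
  exact (div_le_div_iff_of_pos_right ht2).mpr hbase

lemma key_pt {α γ : ℝ} (hα : 0 ≤ α) (hαγ : α < γ) {w z : ℂ}
    (hw : ‖w‖ < 1) (hz : ‖z‖ < 1) (a : ℝ) (ha : 0 ≤ a) :
    (1 - ‖w‖^2) ^ γ * (a * ((γ + 1) * (1 - ‖z‖^2) ^ γ) / ‖1 - (starRingEnd ℂ) w * z‖ ^ (2 + 2*γ))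
      ≤ ((γ+1)/(α+1)) * ((1 - ‖w‖^2) ^ α *
        (a * ((α + 1) * (1 - ‖z‖^2) ^ α) / ‖1 - (starRingEnd ℂ) w * z‖ ^ (2 + 2*α))) := by
  set A := 1 - ‖w‖^2 with hAdef
  set B := 1 - ‖z‖^2 with hBdef
  have hA : 0 < A := by simp only [hAdef]; nlinarith [norm_nonneg w]
  have hB : 0 < B := by simp only [hBdef]; nlinarith [norm_nonneg z]
  set t := ‖1 - (starRingEnd ℂ) w * z‖ with htdef
  have hDt : A * B ≤ t ^ 2 := key_geo w z
  have ht : 0 < t := by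
    have h2 : (0:ℝ) < t^2 := lt_of_lt_of_le (mul_pos hA hB) hDt
    nlinarith [norm_nonneg (1 - (starRingEnd ℂ) w * z)]
  have hL : A ^ γ * (a * ((γ + 1) * B ^ γ) / t ^ (2 + 2*γ))
      = (γ+1) * a * ((A*B) ^ γ / t ^ (2 + 2*γ)) := by
    rw [Real.mul_rpow hA.le hB.le]; ring
  have hR : ((γ+1)/(α+1)) * (A ^ α * (a * ((α + 1) * B ^ α) / t ^ (2 + 2*α)))
      = (γ+1) * a * ((A*B) ^ α / t ^ (2 + 2*α)) := by
    rw [Real.mul_rpow hA.le hB.le]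
    have : α + 1 ≠ 0 := by linarith
    field_simp
  rw [hL, hR]
  have hmono := pow_div_mono ht (mul_pos hA hB) hDt hαγ.le
  have hcoef : 0 ≤ (γ+1) * a := by nlinarith
  exact mul_le_mul_of_nonneg_left hmono hcoef

theorem stmt12 (α γ p : ℝ) (hα : 0 ≤ α) (hαγ : α < γ) (hp : 1 < p) :
    ∃ C : ℝ≥0∞, C ≠ ⊤ ∧ ∀ g : ℂ → ℂ, DifferentiableOn ℂ g unitDisk →
      XnormE p γ g ≤ C * XnormE p α g := by
  set c : ℝ := (γ+1)/(α+1) with hcdef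
  have hc1 : 1 ≤ c := by
    rw [hcdef, le_div_iff₀ (by linarith)]
    linarith
  set C : ℝ≥0∞ := ENNReal.ofReal c ^ (p/2) with hCdef
  have hp2 : (0:ℝ) ≤ p/2 := by linarith
  have hCtop : C ≠ ⊤ := by
    rw [hCdef]
    exact (ENNReal.rpow_lt_top_of_nonneg hp2 ENNReal.ofReal_ne_top).ne
  have hC1 : 1 ≤ C := by
    rw [hCdef]
    calc (1:ℝ≥0∞) = 1 ^ (p/2) := (ENNReal.one_rpow _).symm
    _ ≤ ENNReal.ofReal c ^ (p/2) :=
        ENNReal.rpow_le_rpow (ENNReal.one_le_ofReal.mpr hc1) hp2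
  refine ⟨C, hCtop, fun g _ => ?_⟩
  unfold XnormE
  rw [mul_add]
  refine add_le_add (le_mul_of_one_le_left zero_le hC1) ?_
  rw [← lintegral_const_mul' C _ hCtop]
  refine lintegral_mono_ae ?_
  filter_upwards [ae_restrict_mem measurableSet_ball] with w hw
  have hwn : ‖w‖ < 1 := by simpa [unitDisk] using mem_ball_zero_iff.mp hw
  have hwA : (0:ℝ) ≤ (1 - ‖w‖ ^ 2) ^ γ := Real.rpow_nonneg (by nlinarith [norm_nonneg w]) _
  have hwAα : (0:ℝ) ≤ (1 - ‖w‖ ^ 2) ^ α := Real.rpow_nonneg (by nlinarith [norm_nonneg w]) _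
  rw [← mul_assoc]
  refine mul_le_mul_left ?_ _
  have hbase :
      ENNReal.ofReal ((1 - ‖w‖ ^ 2) ^ γ) *
        (∫⁻ z in unitDisk,
          ENNReal.ofReal (‖deriv g z‖ ^ 2 * ((γ + 1) * (1 - ‖z‖ ^ 2) ^ γ) /
            ‖1 - (starRingEnd ℂ) w * z‖ ^ (2 + 2 * γ)) ∂mA)
      ≤ ENNReal.ofReal c *
        (ENNReal.ofReal ((1 - ‖w‖ ^ 2) ^ α) *
          ∫⁻ z in unitDisk,
            ENNReal.ofReal (‖deriv g z‖ ^ 2 * ((α + 1) * (1 - ‖z‖ ^ 2) ^ α) /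
              ‖1 - (starRingEnd ℂ) w * z‖ ^ (2 + 2 * α)) ∂mA) := by
    rw [← mul_assoc, ← lintegral_const_mul' _ _ ENNReal.ofReal_ne_top,
      ← lintegral_const_mul' _ _ (by exact ENNReal.mul_ne_top ENNReal.ofReal_ne_top ENNReal.ofReal_ne_top)]
    refine lintegral_mono_ae ?_
    filter_upwards [ae_restrict_mem measurableSet_ball] with z hz
    have hzn : ‖z‖ < 1 := by simpa [unitDisk] using mem_ball_zero_iff.mp hz
    rw [← ENNReal.ofReal_mul hwA, ← ENNReal.ofReal_mul (by positivity : (0:ℝ) ≤ c),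
      ← ENNReal.ofReal_mul (by positivity : (0:ℝ) ≤ c * (1 - ‖w‖ ^ 2) ^ α)]
    apply ENNReal.ofReal_le_ofReal
    have := key_pt hα hαγ hwn hzn (‖deriv g z‖ ^ 2) (by positivity)
    calc (1 - ‖w‖ ^ 2) ^ γ * (‖deriv g z‖ ^ 2 * ((γ + 1) * (1 - ‖z‖ ^ 2) ^ γ) /
          ‖1 - (starRingEnd ℂ) w * z‖ ^ (2 + 2 * γ))
        ≤ c * ((1 - ‖w‖^2) ^ α * (‖deriv g z‖ ^ 2 * ((α + 1) * (1 - ‖z‖^2) ^ α) /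
          ‖1 - (starRingEnd ℂ) w * z‖ ^ (2 + 2*α))) := this
      _ = c * (1 - ‖w‖ ^ 2) ^ α * (‖deriv g z‖ ^ 2 * ((α + 1) * (1 - ‖z‖ ^ 2) ^ α) /
          ‖1 - (starRingEnd ℂ) w * z‖ ^ (2 + 2 * α)) := by ring
  calc (ENNReal.ofReal ((1 - ‖w‖ ^ 2) ^ γ) * _) ^ (p/2)
      ≤ (ENNReal.ofReal c * (ENNReal.ofReal ((1 - ‖w‖ ^ 2) ^ α) * _)) ^ (p/2) :=
        ENNReal.rpow_le_rpow hbase hp2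
    _ = C * (ENNReal.ofReal ((1 - ‖w‖ ^ 2) ^ α) * _) ^ (p/2) := by
        rw [ENNReal.mul_rpow_of_nonneg _ _ hp2, hCdef]
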